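/- arXiv:2410.24130 — 2 statements merged into one kernel-verified Lean document; each statement's English description precedes it below -/
import Mathlib

section
/- Recursive formula for star products: if there is a proper edge-colouring c of G with m_e(G,i) = dim(W^i_{G,c}) for i ∈ {r−1, r}, then m_e(G□S_k, r) = m_e(G,r) + k·m_e(G,r−1) + Σ_{t=1}^{k−1} t·d^G_{r−t} + k·Σ_{t=k}^{r} d^G_{r−t}. -/
open Polynomial

namespace BondPerc

open Classical

set_option maxHeartbeats 1000000

/-- The set of edges eventually infected in `r`-bond bootstrap percolation on `G`
starting from the initially infected set `S`. -/
inductive Infected {V : Type*} (G : SimpleGraph V) (r : ℕ) (S : Set (Sym2 V)) : Sym2 V → Prop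
  | init {e : Sym2 V} (he : e ∈ S) : Infected G r S e
  | step {e : Sym2 V} (he : e ∈ G.edgeSet) (v : V) (hv : v ∈ e)
      (T : Finset (Sym2 V)) (hT : r ≤ T.card)
      (hT1 : ∀ f ∈ T, f ∈ G.edgeSet) (hT2 : ∀ f ∈ T, v ∈ f)
      (hT3 : ∀ f ∈ T, Infected G r S f) : Infected G r S e

/-- `S` percolates in `r`-bond bootstrap percolation on `G`. -/
def Percolates {V : Type*} (G : SimpleGraph V) (r : ℕ) (S : Set (Sym2 V)) : Prop :=
  S ⊆ G.edgeSet ∧ ∀ e ∈ G.edgeSet, Infected G r S e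

/-- `m_e(G,r)`: the minimum size of an `r`-percolating set of edges of `G`. -/
noncomputable def me {V : Type*} (G : SimpleGraph V) (r : ℕ) : ℕ :=
  sInf {n | ∃ S : Set (Sym2 V), S.Finite ∧ Percolates G r S ∧ S.ncard = n}

/-- `c` is a proper edge-colouring of `G`: edges sharing a vertex get distinct colours. -/
def IsProperEdgeColoring {V : Type*} (G : SimpleGraph V) (c : Sym2 V → ℝ) : Prop :=
  ∀ e ∈ G.edgeSet, ∀ f ∈ G.edgeSet, e ≠ f → (∃ v, v ∈ e ∧ v ∈ f) → c e ≠ c f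

set_option maxHeartbeats 1000000 in
/-- The vector space `W^r_{G,c}` of tuples of polynomials `(p_v)` with
`deg p_v ≤ min(r, deg v) - 1` and `p_u(c(uv)) = p_v(c(uv))` for every edge `uv`. -/
noncomputable def Wspace {V : Type*} [Fintype V] (G : SimpleGraph V) (r : ℕ)
    (c : Sym2 V → ℝ) : Submodule ℝ (V → Polynomial ℝ) where
  carrier := {p | (∀ v, (p v).degree < (min r (G.degree v) : ℕ)) ∧
    ∀ u v, G.Adj u v → (p u).eval (c s(u, v)) = (p v).eval (c s(u, v))}
  add_mem' := by
    rintro p q ⟨hp1, hp2⟩ ⟨hq1, hq2⟩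
    refine ⟨fun v => lt_of_le_of_lt (degree_add_le _ _) (max_lt (hp1 v) (hq1 v)), ?_⟩
    intro u v huv
    simp only [Pi.add_apply, eval_add, hp2 u v huv, hq2 u v huv]
  zero_mem' := by
    refine ⟨fun v => ?_, fun u v h => by simp⟩
    simp only [Pi.zero_apply, degree_zero]
    exact WithBot.bot_lt_coe _
  smul_mem' := by
    rintro a p ⟨hp1, hp2⟩
    refine ⟨fun v => lt_of_le_of_lt (degree_smul_le a (p v)) (hp1 v), ?_⟩
    intro u v huv
    simp only [Pi.smul_apply, Polynomial.eval_smul, hp2 u v huv]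

/-- `dim W^r_{G,c}`. -/
noncomputable def Wdim {V : Type*} [Fintype V] (G : SimpleGraph V) (r : ℕ)
    (c : Sym2 V → ℝ) : ℕ :=
  Module.finrank ℝ (Wspace G r c)

/-- `d^G_i`, the number of vertices of `G` of degree `i` (indexed by `ℤ`, zero for `i < 0`). -/
noncomputable def dcount {V : Type*} [Fintype V] (G : SimpleGraph V) (i : ℤ) : ℕ :=
  Nat.card {v : V // (G.degree v : ℤ) = i}

/-- The star `S_k` with centre `0` and `k` leaves. -/
def starGraph (k : ℕ) : SimpleGraph (Fin (k + 1)) :=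
  SimpleGraph.fromRel fun i _ => i = 0

/-- The theta graph `H_{k,ℓ}`: two hub vertices joined by three internally disjoint
paths of lengths `1`, `ℓ - 1` and `k - 1`. -/
def thetaGraph (k l : ℕ) : SimpleGraph (Fin 2 ⊕ Fin (l - 2) ⊕ Fin (k - 2)) :=
  SimpleGraph.fromRel fun x y =>
    (x = Sum.inl 0 ∧ y = Sum.inl 1) ∨
    (x = Sum.inl 0 ∧ ∃ j : Fin (l - 2), y = Sum.inr (Sum.inl j) ∧ j.val = 0) ∨
    (∃ i j : Fin (l - 2), x = Sum.inr (Sum.inl i) ∧ y = Sum.inr (Sum.inl j) ∧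
      j.val = i.val + 1) ∨
    (∃ i : Fin (l - 2), x = Sum.inr (Sum.inl i) ∧ i.val = l - 3 ∧ y = Sum.inl 1) ∨
    (x = Sum.inl 0 ∧ ∃ j : Fin (k - 2), y = Sum.inr (Sum.inr j) ∧ j.val = 0) ∨
    (∃ i j : Fin (k - 2), x = Sum.inr (Sum.inr i) ∧ y = Sum.inr (Sum.inr j) ∧
      j.val = i.val + 1) ∨
    (∃ i : Fin (k - 2), x = Sum.inr (Sum.inr i) ∧ i.val = k - 3 ∧ y = Sum.inl 1)


section LemmaA

variable {V : Type*}

lemma eval_eq_of_mem_edge [Fintype V] {G : SimpleGraph V} {r : ℕ} {c : Sym2 V → ℝ}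
    {p : V → Polynomial ℝ} (hp : p ∈ Wspace G r c) {e : Sym2 V} (he : e ∈ G.edgeSet)
    {u v : V} (hu : u ∈ e) (hv : v ∈ e) :
    (p u).eval (c e) = (p v).eval (c e) := by
  induction e with
  | _ a b =>
    have hadj : G.Adj a b := he
    rcases Sym2.mem_iff.1 hu with rfl | rfl <;> rcases Sym2.mem_iff.1 hv with rfl | rfl
    · rfl
    · exact hp.2 _ _ hadj
    · exact (hp.2 _ _ hadj).symm
    · rfl

lemma poly_zero_of_evals [Fintype V] {G : SimpleGraph V} {r : ℕ} {c : Sym2 V → ℝ}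
    (hc : IsProperEdgeColoring G c) {p : V → Polynomial ℝ} (hp : p ∈ Wspace G r c) (v : V)
    (T : Finset (Sym2 V)) (hT1 : ∀ f ∈ T, f ∈ G.edgeSet) (hT2 : ∀ f ∈ T, v ∈ f)
    (hcard : min r (G.degree v) ≤ T.card)
    (hz : ∀ f ∈ T, (p v).eval (c f) = 0) : p v = 0 := by
  classical
  by_cases h0 : p v = 0
  · exact h0
  have hdeg : (p v).natDegree < min r (G.degree v) :=
    (Polynomial.natDegree_lt_iff_degree_lt h0).2 (hp.1 v)
  refine Polynomial.eq_zero_of_natDegree_lt_card_of_eval_eq_zero' (p v) (T.image c) ?_ ?_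
  · intro x hx
    obtain ⟨f, hf, rfl⟩ := Finset.mem_image.1 hx
    exact hz f hf
  · rw [Finset.card_image_of_injOn]
    · exact lt_of_lt_of_le hdeg hcard
    · intro e he f hf hef
      by_contra hne
      exact hc e (hT1 e he) f (hT1 f hf) hne ⟨v, hT2 e he, hT2 f hf⟩ hef

lemma infected_eval_zero [Fintype V] {G : SimpleGraph V} {r : ℕ} {c : Sym2 V → ℝ}
    (hc : IsProperEdgeColoring G c) {S : Set (Sym2 V)} (hS : S ⊆ G.edgeSet)
    {p : V → Polynomial ℝ} (hp : p ∈ Wspace G r c)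
    (h0 : ∀ e ∈ S, ∀ w ∈ e, (p w).eval (c e) = 0)
    {e : Sym2 V} (hinf : Infected G r S e) : ∀ w ∈ e, (p w).eval (c e) = 0 := by
  induction hinf with
  | @init e he => exact h0 e he
  | @step e he v hv T hT hT1 hT2 hT3 ih =>
    intro w hw
    have hpv : p v = 0 := by
      refine poly_zero_of_evals hc hp v T hT1 hT2 (le_trans (min_le_left _ _) hT) ?_
      intro f hf
      exact ih f hf v (hT2 f hf)
    rw [eval_eq_of_mem_edge hp he hw hv, hpv, Polynomial.eval_zero]

lemma wspace_eq_zero [Fintype V] {G : SimpleGraph V} {r : ℕ} {c : Sym2 V → ℝ}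
    (hc : IsProperEdgeColoring G c) {S : Set (Sym2 V)} (hperc : Percolates G r S)
    {p : V → Polynomial ℝ} (hp : p ∈ Wspace G r c)
    (h0 : ∀ e ∈ S, ∀ w ∈ e, (p w).eval (c e) = 0) : p = 0 := by
  classical
  funext v
  by_cases hd : G.degree v = 0
  · have := hp.1 v
    rw [hd] at this
    simp only [min_zero, Nat.cast_zero] at this
    rwa [Nat.WithBot.lt_zero_iff, Polynomial.degree_eq_bot] at this
  · refine poly_zero_of_evals hc hp v (G.incidenceFinset v) ?_ ?_ ?_ ?_
    · intro f hf; exact ((G.mem_incidenceFinset v f).1 hf).1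
    · intro f hf; exact ((G.mem_incidenceFinset v f).1 hf).2
    · rw [G.card_incidenceFinset_eq_degree v]
      exact min_le_right _ _
    · intro f hf
      have hfe := (G.mem_incidenceFinset v f).1 hf
      exact infected_eval_zero hc hperc.1 hp h0 (hperc.2 f hfe.1) v hfe.2

end LemmaA
section Dim

variable {V : Type*}

instance degreeLT_finiteDimensional (n : ℕ) :
    FiniteDimensional ℝ (Polynomial.degreeLT ℝ n) :=
  Module.Finite.equiv (Polynomial.degreeLTEquiv ℝ n).symm

lemma finrank_degreeLT (n : ℕ) :
    Module.finrank ℝ (Polynomial.degreeLT ℝ n) = n := by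
  rw [LinearEquiv.finrank_eq (Polynomial.degreeLTEquiv ℝ n), Module.finrank_pi]
  exact Fintype.card_fin n

noncomputable def WtoPi [Fintype V] (G : SimpleGraph V) (r : ℕ) (c : Sym2 V → ℝ) :
    Wspace G r c →ₗ[ℝ] (V → Polynomial.degreeLT ℝ r) where
  toFun p := fun v => ⟨p.1 v, Polynomial.mem_degreeLT.2
    (lt_of_lt_of_le (p.2.1 v) (by exact_mod_cast min_le_left r (G.degree v)))⟩
  map_add' p q := rfl
  map_smul' a p := rfl

lemma WtoPi_injective [Fintype V] (G : SimpleGraph V) (r : ℕ) (c : Sym2 V → ℝ) :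
    Function.Injective (WtoPi G r c) := by
  intro p q h
  ext v : 2
  exact congrArg Subtype.val (congrFun h v)

instance wspace_finiteDimensional [Fintype V] (G : SimpleGraph V) (r : ℕ) (c : Sym2 V → ℝ) :
    FiniteDimensional ℝ (Wspace G r c) :=
  Module.Finite.of_injective (WtoPi G r c) (WtoPi_injective G r c)

/-- Evaluation map on a finite percolating set. -/
noncomputable def evalMap [Fintype V] (G : SimpleGraph V) (r : ℕ) (c : Sym2 V → ℝ)
    (S : Set (Sym2 V)) : Wspace G r c →ₗ[ℝ] (S → ℝ) where
  toFun p := fun e => ((p : V → Polynomial ℝ) (e : Sym2 V).out.1).eval (c e)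
  map_add' p q := by funext e; simp
  map_smul' a p := by funext e; simp

lemma wdim_le_ncard [Fintype V] {G : SimpleGraph V} {r : ℕ} {c : Sym2 V → ℝ}
    (hc : IsProperEdgeColoring G c) {S : Set (Sym2 V)} (hfin : S.Finite)
    (hperc : Percolates G r S) : Wdim G r c ≤ S.ncard := by
  classical
  letI := hfin.fintype
  have hinj : Function.Injective (evalMap G r c S) := by
    rw [injective_iff_map_eq_zero]
    intro p hp
    have h0 : ∀ e ∈ S, ∀ w ∈ e, ((p : V → Polynomial ℝ) w).eval (c e) = 0 := by
      intro e he w hw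
      have h1 : ((p : V → Polynomial ℝ) (e : Sym2 V).out.1).eval (c e) = 0 :=
        congrFun hp (⟨e, he⟩ : S)
      rw [eval_eq_of_mem_edge p.2 (hperc.1 he) hw (Sym2.out_fst_mem e), h1]
    have := wspace_eq_zero hc hperc p.2 h0
    exact Subtype.ext this
  have hle := LinearMap.finrank_le_finrank_of_injective hinj
  rw [Module.finrank_pi ℝ] at hle
  unfold Wdim
  exact hle.trans_eq (by rw [← Nat.card_eq_fintype_card, Nat.card_coe_set_eq])

lemma me_nonempty [Fintype V] (G : SimpleGraph V) (r : ℕ) :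
    {n | ∃ S : Set (Sym2 V), S.Finite ∧ Percolates G r S ∧ S.ncard = n}.Nonempty := by
  refine ⟨G.edgeSet.ncard, G.edgeSet, Set.toFinite _, ⟨subset_rfl, fun e he => Infected.init he⟩, rfl⟩

theorem wdim_le_me [Fintype V] (G : SimpleGraph V) (r : ℕ) (c : Sym2 V → ℝ)
    (hc : IsProperEdgeColoring G c) : Wdim G r c ≤ me G r := by
  refine le_csInf (me_nonempty G r) ?_
  rintro n ⟨S, hfin, hperc, rfl⟩
  exact wdim_le_ncard hc hfin hperc

end Dim
section Star

variable {V : Type*}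

lemma starGraph_adj {k : ℕ} {i j : Fin (k+1)} :
    (starGraph k).Adj i j ↔ i ≠ j ∧ (i = 0 ∨ j = 0) := by
  simp [starGraph, SimpleGraph.fromRel_adj]

lemma starGraph_neighborSet_zero {k : ℕ} :
    (starGraph k).neighborSet 0 = {j | j ≠ 0} := by
  ext j; simp [SimpleGraph.mem_neighborSet, starGraph_adj, ne_comm]

lemma starGraph_neighborSet_ne {k : ℕ} {i : Fin (k+1)} (hi : i ≠ 0) :
    (starGraph k).neighborSet i = {0} := by
  ext j
  simp only [SimpleGraph.mem_neighborSet, starGraph_adj, Set.mem_singleton_iff]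
  constructor
  · rintro ⟨hne, h | h⟩
    · exact absurd h hi
    · exact h
  · rintro rfl; exact ⟨hi, Or.inr rfl⟩

lemma starGraph_degree_zero (k : ℕ) [Fintype ((starGraph k).neighborSet 0)] :
    (starGraph k).degree 0 = k := by
  classical
  rw [← SimpleGraph.card_neighborSet_eq_degree]
  have : Fintype.card ((starGraph k).neighborSet 0) = Fintype.card {j : Fin (k+1) // j ≠ 0} := by
    apply Fintype.card_congr
    apply Equiv.subtypeEquiv (Equiv.refl _)
    intro j
    rw [show ((starGraph k).neighborSet 0 : Set (Fin (k+1))) = {j | j ≠ 0} from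
      starGraph_neighborSet_zero]
    rfl
  rw [this, Fintype.card_subtype_compl, Fintype.card_fin, Fintype.card_subtype_eq]
  omega

lemma starGraph_degree_ne {k : ℕ} {i : Fin (k+1)} (hi : i ≠ 0)
    [Fintype ((starGraph k).neighborSet i)] : (starGraph k).degree i = 1 := by
  classical
  rw [← SimpleGraph.card_neighborSet_eq_degree]
  have : Fintype.card ((starGraph k).neighborSet i) = Fintype.card ({0} : Set (Fin (k+1))) := by
    apply Fintype.card_congr
    exact Equiv.setCongr (starGraph_neighborSet_ne hi)
  rw [this]
  simp

end Star

section BoxHelpers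

variable {V : Type*} [Fintype V] {k : ℕ}

/-- image of an edge in layer `i`. -/
def layerMap (i : Fin (k+1)) : Sym2 V → Sym2 (V × Fin (k+1)) :=
  Sym2.map (fun v => (v, i))

/-- the star edge at `v` towards leaf `i`. -/
def starEdge (v : V) (i : Fin (k+1)) : Sym2 (V × Fin (k+1)) :=
  s((v, (0 : Fin (k+1))), (v, i))

lemma layerMap_injective (i : Fin (k+1)) : Function.Injective (layerMap (V := V) i) :=
  Sym2.map.injective (fun a b h => congrArg Prod.fst h)

lemma layerMap_mem_edgeSet {G : SimpleGraph V} {e : Sym2 V} (he : e ∈ G.edgeSet)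
    (i : Fin (k+1)) : layerMap i e ∈ (G □ starGraph k).edgeSet := by
  induction e with
  | _ a b => exact Or.inl ⟨he, rfl⟩

lemma starEdge_mem_edgeSet (G : SimpleGraph V) {v : V} {i : Fin (k+1)} (hi : i ≠ 0) :
    starEdge v i ∈ (G □ starGraph k).edgeSet := by
  refine Or.inr ⟨?_, rfl⟩
  exact starGraph_adj.2 ⟨Ne.symm hi, Or.inl rfl⟩

lemma mem_layerMap {v : V} {e : Sym2 V} (hv : v ∈ e) (i : Fin (k+1)) :
    (v, i) ∈ layerMap i e :=
  Sym2.mem_map.2 ⟨v, hv, rfl⟩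

lemma snd_eq_of_mem_layerMap {x : V × Fin (k+1)} {e : Sym2 V} {i : Fin (k+1)}
    (hx : x ∈ layerMap i e) : x.2 = i := by
  obtain ⟨a, _, rfl⟩ := Sym2.mem_map.1 hx
  rfl

lemma mem_starEdge_fst {v : V} {i : Fin (k+1)} {x : V × Fin (k+1)} (hx : x ∈ starEdge v i) :
    x.1 = v := by
  rcases Sym2.mem_iff.1 hx with rfl | rfl <;> rfl

lemma starEdge_ne_layerMap {v : V} {i j : Fin (k+1)} (hi : i ≠ 0) {e : Sym2 V} :
    starEdge v i ≠ layerMap j e := by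
  intro h
  have h0 : ((v, (0 : Fin (k+1))) : V × Fin (k+1)) ∈ layerMap j e := by
    rw [← h]; exact Sym2.mem_mk_left _ _
  have hi' : ((v, i) : V × Fin (k+1)) ∈ layerMap j e := by
    rw [← h]; exact Sym2.mem_mk_right _ _
  have := snd_eq_of_mem_layerMap h0
  have := snd_eq_of_mem_layerMap hi'
  exact hi (by grind)

lemma starEdge_inj {v w : V} {i j : Fin (k+1)} (hi : i ≠ 0) (hj : j ≠ 0)
    (h : starEdge v i = starEdge w j) : v = w ∧ i = j := by
  have hv : ((v, (0:Fin (k+1))) : V × Fin (k+1)) ∈ starEdge w j := by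
    rw [← h]; exact Sym2.mem_mk_left _ _
  rcases Sym2.mem_iff.1 hv with h1 | h1
  · have hvw : v = w := congrArg Prod.fst h1
    subst hvw
    have h' : s((v,(0:Fin (k+1))),(v,i)) = s((v,(0:Fin (k+1))),(v,j)) := h
    exact ⟨rfl, congrArg Prod.snd (Sym2.congr_right.1 h')⟩
  · exact absurd (congrArg Prod.snd h1).symm hj

lemma boxProd_edge_cases {G : SimpleGraph V} {e : Sym2 (V × Fin (k+1))}
    (he : e ∈ (G □ starGraph k).edgeSet) :
    (∃ f ∈ G.edgeSet, ∃ i, e = layerMap i f) ∨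
    (∃ v, ∃ i ≠ (0 : Fin (k+1)), e = starEdge v i) := by
  induction e with
  | _ x y =>
    obtain ⟨a, i⟩ := x
    obtain ⟨b, j⟩ := y
    rcases he with ⟨hadj, h2⟩ | ⟨hadj, h2⟩
    · simp only at hadj h2
      subst h2
      exact Or.inl ⟨s(a, b), hadj, i, rfl⟩
    · simp only at hadj h2
      subst h2
      rcases (starGraph_adj.1 hadj) with ⟨hne, h0 | h0⟩
      · subst h0
        exact Or.inr ⟨a, j, Ne.symm hne, rfl⟩
      · subst h0
        exact Or.inr ⟨a, i, hne, Sym2.eq_swap⟩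

end BoxHelpers
section Upper

variable {V : Type*} [Fintype V] {k r : ℕ}

open Classical

lemma layer_eq_layer_snd {i j : Fin (k+1)} {f g : Sym2 V}
    (h : layerMap i f = layerMap j g) : i = j := by
  have h1 : (f.out.1, i) ∈ layerMap i f := mem_layerMap (Sym2.out_fst_mem f) i
  rw [h] at h1
  exact snd_eq_of_mem_layerMap h1

lemma card_filter_val_le {m : ℕ} (hm : m ≤ k) :
    ((Finset.univ : Finset (Fin (k+1))).filter (fun i => 1 ≤ i.val ∧ i.val ≤ m)).card = m := by
  classical
  have hbij : ((Finset.univ : Finset (Fin (k+1))).filter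
      (fun i => 1 ≤ i.val ∧ i.val ≤ m)).card = (Finset.Icc 1 m).card := by
    apply Finset.card_bij (fun i _ => i.val)
    · intro a ha
      simp only [Finset.mem_filter] at ha
      simp only [Finset.mem_Icc]
      exact ha.2
    · intro a ha b hb h
      exact Fin.val_injective h
    · intro t ht
      simp only [Finset.mem_Icc] at ht
      refine ⟨⟨t, by omega⟩, ?_, rfl⟩
      simp only [Finset.mem_filter, Finset.mem_univ, true_and]
      exact ht
  rw [hbij, Nat.card_Icc]
  omega

/-- star edges placed initially at `v`. -/
noncomputable def starFin (G : SimpleGraph V) (r k : ℕ) (v : V) :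
    Finset (Sym2 (V × Fin (k+1))) :=
  (Finset.univ.filter (fun i : Fin (k+1) => 1 ≤ i.val ∧ i.val ≤ min (r - G.degree v) k)).image
    (starEdge v)

lemma mem_starFin {G : SimpleGraph V} {v : V} {e : Sym2 (V × Fin (k+1))} :
    e ∈ starFin G r k v ↔ ∃ i : Fin (k+1), 1 ≤ i.val ∧ i.val ≤ min (r - G.degree v) k ∧
      e = starEdge v i := by
  simp only [starFin, Finset.mem_image, Finset.mem_filter, Finset.mem_univ, true_and]
  constructor
  · rintro ⟨i, ⟨h1, h2⟩, rfl⟩; exact ⟨i, h1, h2, rfl⟩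
  · rintro ⟨i, h1, h2, rfl⟩; exact ⟨i, ⟨h1, h2⟩, rfl⟩

lemma starFin_card (G : SimpleGraph V) (v : V) :
    (starFin G r k v).card = min (r - G.degree v) k := by
  rw [starFin, Finset.card_image_of_injOn, card_filter_val_le (min_le_right _ _)]
  intro i hi j hj hij
  simp only [Finset.mem_coe, Finset.mem_filter] at hi hj
  have hi0 : i ≠ 0 := by intro h; subst h; exact absurd hi.2.1 (by simp)
  have hj0 : j ≠ 0 := by intro h; subst h; exact absurd hj.2.1 (by simp)
  exact (starEdge_inj hi0 hj0 hij).2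

/-- the initial percolating set on `G □ S_k`. -/
noncomputable def SHfin (G : SimpleGraph V) (r k : ℕ) (A B : Finset (Sym2 V)) :
    Finset (Sym2 (V × Fin (k+1))) :=
  A.image (layerMap 0) ∪
    Finset.univ.biUnion (fun i : Fin (k+1) =>
      if i = 0 then ∅ else B.image (layerMap i)) ∪
    Finset.univ.biUnion (fun v : V => starFin G r k v)

variable {G : SimpleGraph V} {A B : Finset (Sym2 V)}

lemma starFin_subset_SH (v : V) : starFin G r k v ⊆ SHfin G r k A B := by
  intro e he
  exact Finset.mem_union_right _ (Finset.mem_biUnion.2 ⟨v, Finset.mem_univ v, he⟩)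

lemma layerA_subset_SH {e : Sym2 V} (he : e ∈ A) :
    layerMap 0 e ∈ SHfin G r k A B :=
  Finset.mem_union_left _ (Finset.mem_union_left _ (Finset.mem_image_of_mem _ he))

lemma layerB_subset_SH {e : Sym2 V} (he : e ∈ B) {i : Fin (k+1)} (hi : i ≠ 0) :
    layerMap i e ∈ SHfin G r k A B := by
  refine Finset.mem_union_left _ (Finset.mem_union_right _ (Finset.mem_biUnion.2
    ⟨i, Finset.mem_univ i, ?_⟩))
  rw [if_neg hi]
  exact Finset.mem_image_of_mem _ he

lemma SH_subset_edgeSet (hA : ↑A ⊆ G.edgeSet) (hB : ↑B ⊆ G.edgeSet)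
    (hr : 1 ≤ r) : ↑(SHfin G r k A B) ⊆ (G □ starGraph k).edgeSet := by
  intro e he
  rw [Finset.mem_coe, SHfin, Finset.mem_union, Finset.mem_union] at he
  rcases he with (he | he) | he
  · obtain ⟨f, hf, rfl⟩ := Finset.mem_image.1 he
    exact layerMap_mem_edgeSet (hA hf) 0
  · obtain ⟨i, _, hei⟩ := Finset.mem_biUnion.1 he
    by_cases hi : i = 0
    · rw [if_pos hi] at hei; exact absurd hei (Finset.notMem_empty e)
    · rw [if_neg hi] at hei
      obtain ⟨f, hf, rfl⟩ := Finset.mem_image.1 hei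
      exact layerMap_mem_edgeSet (hB hf) i
  · obtain ⟨v, _, hev⟩ := Finset.mem_biUnion.1 he
    obtain ⟨i, h1, _, rfl⟩ := mem_starFin.1 hev
    exact starEdge_mem_edgeSet G (fun h => by subst h; exact absurd h1 (by simp))

lemma phase0 (hA : Percolates G r ↑A) {e : Sym2 V} (hinf : Infected G r ↑A e) :
    Infected (G □ starGraph k) r ↑(SHfin G r k A B) (layerMap 0 e) := by
  induction hinf with
  | @init e he => exact Infected.init (layerA_subset_SH he)
  | @step e he v hv T hT hT1 hT2 hT3 ih =>
    refine Infected.step (layerMap_mem_edgeSet he 0) (v, 0) (mem_layerMap hv 0)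
      (T.image (layerMap 0)) ?_ ?_ ?_ ?_
    · rwa [Finset.card_image_of_injective _ (layerMap_injective 0)]
    · intro f hf
      obtain ⟨g, hg, rfl⟩ := Finset.mem_image.1 hf
      exact layerMap_mem_edgeSet (hT1 g hg) 0
    · intro f hf
      obtain ⟨g, hg, rfl⟩ := Finset.mem_image.1 hf
      exact mem_layerMap (hT2 g hg) 0
    · intro f hf
      obtain ⟨g, hg, rfl⟩ := Finset.mem_image.1 hf
      exact ih g hg

lemma phase1 (hA : Percolates G r ↑A) (v : V) (i : Fin (k+1)) (hi : i ≠ 0) :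
    Infected (G □ starGraph k) r ↑(SHfin G r k A B) (starEdge v i) := by
  by_cases hin : i.val ≤ min (r - G.degree v) k
  · refine Infected.init (starFin_subset_SH v ?_)
    exact mem_starFin.2 ⟨i, by
      rcases Nat.eq_or_lt_of_le (Nat.zero_le i.val) with h | h
      · exact absurd (Fin.ext h.symm : i = 0) hi
      · exact h, hin, rfl⟩
  · push_neg at hin
    refine Infected.step (starEdge_mem_edgeSet G hi) (v, 0) (Sym2.mem_mk_left _ _)
      ((G.incidenceFinset v).image (layerMap 0) ∪ starFin G r k v) ?_ ?_ ?_ ?_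
    · have hdisj : Disjoint ((G.incidenceFinset v).image (layerMap 0)) (starFin G r k v) := by
        rw [Finset.disjoint_right]
        intro e he hle
        obtain ⟨j, h1, _, rfl⟩ := mem_starFin.1 he
        obtain ⟨f, _, hf⟩ := Finset.mem_image.1 hle
        exact starEdge_ne_layerMap (fun h => by subst h; exact absurd h1 (by simp)) hf.symm
      rw [Finset.card_union_of_disjoint hdisj,
        Finset.card_image_of_injective _ (layerMap_injective 0),
        G.card_incidenceFinset_eq_degree v, starFin_card]
      have hik : i.val ≤ k := by omega
      rcases Nat.le_total (r - G.degree v) k with h | h <;> omega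
    · intro f hf
      rcases Finset.mem_union.1 hf with hf | hf
      · obtain ⟨g, hg, rfl⟩ := Finset.mem_image.1 hf
        exact layerMap_mem_edgeSet ((G.mem_incidenceFinset v g).1 hg).1 0
      · obtain ⟨j, h1, _, rfl⟩ := mem_starFin.1 hf
        exact starEdge_mem_edgeSet G (fun h => by subst h; exact absurd h1 (by simp))
    · intro f hf
      rcases Finset.mem_union.1 hf with hf | hf
      · obtain ⟨g, hg, rfl⟩ := Finset.mem_image.1 hf
        exact mem_layerMap ((G.mem_incidenceFinset v g).1 hg).2 0
      · obtain ⟨j, _, _, rfl⟩ := mem_starFin.1 hf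
        exact Sym2.mem_mk_left _ _
    · intro f hf
      rcases Finset.mem_union.1 hf with hf | hf
      · obtain ⟨g, hg, rfl⟩ := Finset.mem_image.1 hf
        exact phase0 hA (hA.2 g ((G.mem_incidenceFinset v g).1 hg).1)
      · exact Infected.init (starFin_subset_SH v hf)

lemma phase2 (hA : Percolates G r ↑A) (hr : 1 ≤ r) {i : Fin (k+1)} (hi : i ≠ 0)
    {e : Sym2 V} (hinf : Infected G (r-1) ↑B e) :
    Infected (G □ starGraph k) r ↑(SHfin G r k A B) (layerMap i e) := by
  induction hinf with
  | @init e he => exact Infected.init (layerB_subset_SH he hi)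
  | @step e he v hv T hT hT1 hT2 hT3 ih =>
    refine Infected.step (layerMap_mem_edgeSet he i) (v, i) (mem_layerMap hv i)
      (insert (starEdge v i) (T.image (layerMap i))) ?_ ?_ ?_ ?_
    · rw [Finset.card_insert_of_notMem, Finset.card_image_of_injective _ (layerMap_injective i)]
      · omega
      · intro hmem
        obtain ⟨g, _, hg⟩ := Finset.mem_image.1 hmem
        exact starEdge_ne_layerMap hi hg.symm
    · intro f hf
      rcases Finset.mem_insert.1 hf with rfl | hf
      · exact starEdge_mem_edgeSet G hi
      · obtain ⟨g, hg, rfl⟩ := Finset.mem_image.1 hf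
        exact layerMap_mem_edgeSet (hT1 g hg) i
    · intro f hf
      rcases Finset.mem_insert.1 hf with rfl | hf
      · exact Sym2.mem_mk_right _ _
      · obtain ⟨g, hg, rfl⟩ := Finset.mem_image.1 hf
        exact mem_layerMap (hT2 g hg) i
    · intro f hf
      rcases Finset.mem_insert.1 hf with rfl | hf
      · exact phase1 hA v i hi
      · obtain ⟨g, hg, rfl⟩ := Finset.mem_image.1 hf
        exact ih g hg

lemma SH_percolates (hA : Percolates G r ↑A) (hB : Percolates G (r-1) ↑B) (hr : 1 ≤ r) :
    Percolates (G □ starGraph k) r ↑(SHfin G r k A B) := by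
  refine ⟨SH_subset_edgeSet hA.1 hB.1 hr, ?_⟩
  intro e he
  rcases boxProd_edge_cases he with ⟨f, hf, i, rfl⟩ | ⟨v, i, hi, rfl⟩
  · by_cases hi : i = 0
    · subst hi; exact phase0 hA (hA.2 f hf)
    · exact phase2 hA hr hi (hB.2 f hf)
  · exact phase1 hA v i hi

end Upper
section Card

variable {V : Type*} [Fintype V] {k r : ℕ} {G : SimpleGraph V} {A B : Finset (Sym2 V)}

open Classical

lemma SHfin_card :
    (SHfin G r k A B).card = A.card + k * B.card + ∑ v : V, min (r - G.degree v) k := by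
  classical
  have hd1 : Disjoint (A.image (layerMap 0))
      (Finset.univ.biUnion (fun i : Fin (k+1) => if i = 0 then ∅ else B.image (layerMap i))) := by
    rw [Finset.disjoint_left]
    intro e he he'
    obtain ⟨f, _, rfl⟩ := Finset.mem_image.1 he
    obtain ⟨i, _, hei⟩ := Finset.mem_biUnion.1 he'
    by_cases hi : i = 0
    · rw [if_pos hi] at hei; exact absurd hei (Finset.notMem_empty _)
    · rw [if_neg hi] at hei
      obtain ⟨g, _, hg⟩ := Finset.mem_image.1 hei
      exact hi (layer_eq_layer_snd hg.symm).symm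
  have hd2 : Disjoint (A.image (layerMap 0) ∪
      Finset.univ.biUnion (fun i : Fin (k+1) => if i = 0 then ∅ else B.image (layerMap i)))
      (Finset.univ.biUnion (fun v : V => starFin G r k v)) := by
    rw [Finset.disjoint_right]
    intro e he he'
    obtain ⟨v, _, hev⟩ := Finset.mem_biUnion.1 he
    obtain ⟨i, h1, _, rfl⟩ := mem_starFin.1 hev
    have hi : i ≠ 0 := fun h => by subst h; exact absurd h1 (by simp)
    rcases Finset.mem_union.1 he' with he' | he'
    · obtain ⟨f, _, hf⟩ := Finset.mem_image.1 he'
      exact starEdge_ne_layerMap hi hf.symm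
    · obtain ⟨j, _, hej⟩ := Finset.mem_biUnion.1 he'
      by_cases hj : j = 0
      · rw [if_pos hj] at hej; exact absurd hej (Finset.notMem_empty _)
      · rw [if_neg hj] at hej
        obtain ⟨g, _, hg⟩ := Finset.mem_image.1 hej
        exact starEdge_ne_layerMap hi hg.symm
  rw [SHfin, Finset.card_union_of_disjoint hd2, Finset.card_union_of_disjoint hd1]
  congr 1
  · congr 1
    · exact Finset.card_image_of_injective _ (layerMap_injective 0)
    · rw [Finset.card_biUnion]
      · rw [← Finset.sum_erase_add _ _ (Finset.mem_univ (0 : Fin (k+1)))]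
        simp only [if_pos rfl, Finset.card_empty, add_zero]
        have : ∀ i ∈ Finset.univ.erase (0 : Fin (k+1)),
            (if i = 0 then (∅ : Finset (Sym2 (V × Fin (k+1)))) else B.image (layerMap i)).card
              = B.card := by
          intro i hi
          rw [if_neg (Finset.mem_erase.1 hi).1]
          exact Finset.card_image_of_injective _ (layerMap_injective i)
        rw [Finset.sum_congr rfl this, Finset.sum_const, Finset.card_erase_of_mem
          (Finset.mem_univ _), Finset.card_univ, Fintype.card_fin, smul_eq_mul]
        congr 1
      · intro i _ j _ hij
        simp only [Function.onFun]
        rw [Finset.disjoint_left]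
        intro e hei hej
        by_cases hi : i = 0
        · rw [if_pos hi] at hei; exact absurd hei (Finset.notMem_empty _)
        · rw [if_neg hi] at hei
          by_cases hj : j = 0
          · rw [if_pos hj] at hej; exact absurd hej (Finset.notMem_empty _)
          · rw [if_neg hj] at hej
            obtain ⟨f, _, rfl⟩ := Finset.mem_image.1 hei
            obtain ⟨g, _, hg⟩ := Finset.mem_image.1 hej
            exact hij (layer_eq_layer_snd hg.symm)
  · rw [Finset.card_biUnion]
    · exact Finset.sum_congr rfl (fun v _ => starFin_card G v)
    · intro v _ w _ hvw
      simp only [Function.onFun]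
      rw [Finset.disjoint_left]
      intro e hev hew
      obtain ⟨i, h1, _, rfl⟩ := mem_starFin.1 hev
      obtain ⟨j, h1', _, hj⟩ := mem_starFin.1 hew
      have hi : i ≠ 0 := fun h => by subst h; exact absurd h1 (by simp)
      have hj0 : j ≠ 0 := fun h => by subst h; exact absurd h1' (by simp)
      exact hvw (starEdge_inj hi hj0 hj).1

lemma me_exists_set (G' : SimpleGraph V) (r' : ℕ) :
    ∃ S : Set (Sym2 V), S.Finite ∧ Percolates G' r' S ∧ S.ncard = me G' r' :=
  Nat.sInf_mem (me_nonempty G' r')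

lemma me_upper (hr : 1 ≤ r) (hk : 1 ≤ k) :
    me (G □ starGraph k) r ≤ me G r + k * me G (r-1) + ∑ v : V, min (r - G.degree v) k := by
  classical
  obtain ⟨SA, hSAfin, hSAperc, hSAcard⟩ := me_exists_set G r
  obtain ⟨SB, hSBfin, hSBperc, hSBcard⟩ := me_exists_set G (r-1)
  set A := hSAfin.toFinset with hA
  set B := hSBfin.toFinset with hB
  have hAco : (A : Set (Sym2 V)) = SA := hSAfin.coe_toFinset
  have hBco : (B : Set (Sym2 V)) = SB := hSBfin.coe_toFinset
  have hAperc : Percolates G r ↑A := hAco ▸ hSAperc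
  have hBperc : Percolates G (r-1) ↑B := hBco ▸ hSBperc
  have hperc := SH_percolates (k := k) hAperc hBperc hr
  refine le_trans (Nat.sInf_le ⟨↑(SHfin G r k A B), (SHfin G r k A B).finite_toSet,
    hperc, rfl⟩) ?_
  rw [Set.ncard_coe_finset, SHfin_card]
  have hcA : A.card = me G r := by
    rw [← hSAcard, ← hAco, Set.ncard_coe_finset]
  have hcB : B.card = me G (r-1) := by
    rw [← hSBcard, ← hBco, Set.ncard_coe_finset]
  rw [hcA, hcB]

end Card
section Colour

variable {V : Type*} [Fintype V] {k : ℕ}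

open Classical

lemma exists_alpha (c : Sym2 V → ℝ) (k : ℕ) :
    ∃ α : Fin (k+1) → ℝ, Function.Injective α ∧ ∀ i, α i ∉ Set.range c := by
  have hfin : (Set.range c).Finite := Set.finite_range c
  have hinf : ((Set.range c)ᶜ : Set ℝ).Infinite := hfin.infinite_compl
  haveI := hinf.to_subtype
  let emb : Fin (k+1) ↪ ((Set.range c)ᶜ : Set ℝ) :=
    Fin.valEmbedding.trans (Infinite.natEmbedding ((Set.range c)ᶜ : Set ℝ))
  refine ⟨fun i => (emb i : ℝ), ?_, ?_⟩
  · intro i j h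
    exact emb.injective (Subtype.ext h)
  · intro i
    exact (emb i).2

/-- The extended colouring on `G □ S_k`. -/
noncomputable def cBox (c : Sym2 V → ℝ) (α : Fin (k+1) → ℝ) : Sym2 (V × Fin (k+1)) → ℝ :=
  Sym2.lift ⟨fun x y => if x.2 = y.2 then c s(x.1, y.1) else α (x.2 ⊔ y.2), by
    intro x y
    dsimp only
    by_cases h : x.2 = y.2
    · rw [if_pos h, if_pos h.symm, Sym2.eq_swap]
    · rw [if_neg h, if_neg (Ne.symm h), sup_comm]⟩

lemma cBox_mk (c : Sym2 V → ℝ) (α : Fin (k+1) → ℝ) (x y : V × Fin (k+1)) :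
    cBox c α s(x, y) = if x.2 = y.2 then c s(x.1, y.1) else α (x.2 ⊔ y.2) :=
  Sym2.lift_mk _ _ _

lemma cBox_layerMap (c : Sym2 V → ℝ) (α : Fin (k+1) → ℝ) (i : Fin (k+1)) (e : Sym2 V) :
    cBox c α (layerMap i e) = c e := by
  induction e with
  | _ a b => rw [layerMap, Sym2.map_pair_eq, cBox_mk, if_pos rfl]

lemma cBox_starEdge (c : Sym2 V → ℝ) (α : Fin (k+1) → ℝ) (v : V) {i : Fin (k+1)}
    (hi : i ≠ 0) : cBox c α (starEdge v i) = α i := by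
  rw [starEdge, cBox_mk, if_neg (Ne.symm hi)]
  congr 1

lemma layerMap_mem_edgeSet_iff {G : SimpleGraph V} {e : Sym2 V} {i : Fin (k+1)} :
    layerMap i e ∈ (G □ starGraph k).edgeSet ↔ e ∈ G.edgeSet := by
  refine ⟨?_, fun h => layerMap_mem_edgeSet h i⟩
  induction e with
  | _ a b =>
    intro h
    rcases h with ⟨hadj, _⟩ | ⟨hadj, _⟩
    · exact hadj
    · exact absurd rfl (starGraph_adj.1 hadj).1

lemma mem_layerMap_iff {x : V × Fin (k+1)} {e : Sym2 V} {i : Fin (k+1)} :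
    x ∈ layerMap i e ↔ x.2 = i ∧ x.1 ∈ e := by
  constructor
  · intro hx
    obtain ⟨a, ha, rfl⟩ := Sym2.mem_map.1 hx
    exact ⟨rfl, ha⟩
  · rintro ⟨h2, h1⟩
    have : x = (x.1, i) := by rw [← h2]
    rw [this]
    exact mem_layerMap h1 i

lemma cBox_proper {G : SimpleGraph V} {c : Sym2 V → ℝ} (hc : IsProperEdgeColoring G c)
    {α : Fin (k+1) → ℝ} (hα : Function.Injective α) (hαr : ∀ i, α i ∉ Set.range c) :
    IsProperEdgeColoring (G □ starGraph k) (cBox c α) := by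
  intro e he f hf hef ⟨x, hxe, hxf⟩
  rcases boxProd_edge_cases he with ⟨e', he', i, rfl⟩ | ⟨v, i, hi, rfl⟩ <;>
    rcases boxProd_edge_cases hf with ⟨f', hf', j, rfl⟩ | ⟨w, j, hj, rfl⟩
  · -- layer vs layer
    rw [cBox_layerMap, cBox_layerMap]
    obtain ⟨hx2, hx1e⟩ := mem_layerMap_iff.1 hxe
    obtain ⟨hx2', hx1f⟩ := mem_layerMap_iff.1 hxf
    have hij : i = j := by rw [← hx2, hx2']
    subst hij
    refine hc e' he' f' hf' ?_ ⟨x.1, hx1e, hx1f⟩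
    intro h; exact hef (by rw [h])
  · -- layer vs star
    rw [cBox_layerMap, cBox_starEdge c α w hj]
    intro h
    exact hαr j ⟨e', h⟩
  · -- star vs layer
    rw [cBox_layerMap, cBox_starEdge c α v hi]
    intro h
    exact hαr i ⟨f', h.symm⟩
  · -- star vs star
    rw [cBox_starEdge c α v hi, cBox_starEdge c α w hj]
    intro h
    have hij : i = j := hα h
    subst hij
    have hvw : v = w := by
      have h1 := mem_starEdge_fst hxe
      have h2 := mem_starEdge_fst hxf
      rw [← h1, h2]
    exact hef (by rw [hvw])

end Colour
section Mpoly

variable {V : Type*} [Fintype V] {k r : ℕ}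

open Classical Polynomial

/-- the vanishing polynomial at the colours around `v`. -/
noncomputable def mpoly (G : SimpleGraph V) (c : Sym2 V → ℝ) (v : V) : Polynomial ℝ :=
  ∏ u ∈ G.neighborFinset v, (X - C (c s(v, u)))

lemma mpoly_monic (G : SimpleGraph V) (c : Sym2 V → ℝ) (v : V) : (mpoly G c v).Monic :=
  monic_prod_of_monic _ _ (fun u _ => monic_X_sub_C _)

lemma mpoly_ne_zero (G : SimpleGraph V) (c : Sym2 V → ℝ) (v : V) : mpoly G c v ≠ 0 :=
  (mpoly_monic G c v).ne_zero

lemma mpoly_natDegree (G : SimpleGraph V) (c : Sym2 V → ℝ) (v : V) :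
    (mpoly G c v).natDegree = G.degree v := by
  rw [mpoly, Polynomial.natDegree_prod_of_monic _ _ (fun u _ => monic_X_sub_C _)]
  rw [Finset.sum_congr rfl (fun u _ => natDegree_X_sub_C _), Finset.sum_const, smul_eq_mul,
    mul_one]
  rfl

lemma mpoly_eval_zero {G : SimpleGraph V} (c : Sym2 V → ℝ) {u v : V} (h : G.Adj v u) :
    (mpoly G c v).eval (c s(u, v)) = 0 := by
  rw [mpoly, Polynomial.eval_prod]
  apply Finset.prod_eq_zero (i := u) (by simpa using h)
  rw [Sym2.eq_swap, Polynomial.eval_sub, Polynomial.eval_X, Polynomial.eval_C, sub_self]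

lemma degree_inst_irrel {W : Type*} (G' : SimpleGraph W) (x : W)
    (i1 i2 : Fintype (G'.neighborSet x)) :
    @SimpleGraph.degree _ G' x i1 = @SimpleGraph.degree _ G' x i2 := by
  congr!

lemma boxStar_degree (G : SimpleGraph V) (v : V) (i : Fin (k+1))
    [inst : Fintype ((G □ starGraph k).neighborSet (v, i))] :
    (G □ starGraph k).degree (v, i) = G.degree v + if i = 0 then k else 1 := by
  classical
  rw [@SimpleGraph.degree_boxProd _ _ G (starGraph k) (v, i) inferInstance inferInstance inst]
  congr 1
  by_cases h : i = 0
  · subst h; rw [if_pos rfl]; exact starGraph_degree_zero k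
  · rw [if_neg h]; exact starGraph_degree_ne h

lemma degree_lt_add {p q : Polynomial ℝ} {n : ℕ} (hp : p.degree < (n : ℕ))
    (hq : q.degree < (n : ℕ)) : (p + q).degree < (n : ℕ) :=
  lt_of_le_of_lt (Polynomial.degree_add_le _ _) (max_lt hp hq)

lemma degree_lt_mono {p : Polynomial ℝ} {m n : ℕ} (hp : p.degree < (m : ℕ)) (h : m ≤ n) :
    p.degree < (n : ℕ) :=
  lt_of_lt_of_le hp (by exact_mod_cast h)

lemma degreeLT_zero_of_mem {g : Polynomial ℝ} {n : ℕ} (hg : g ∈ Polynomial.degreeLT ℝ n)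
    (hn : n = 0) : g = 0 := by
  subst hn
  have := Polynomial.mem_degreeLT.1 hg
  rw [Nat.cast_zero, Nat.WithBot.lt_zero_iff, Polynomial.degree_eq_bot] at this
  exact this

lemma natDegree_lt_of_mem_degreeLT {g : Polynomial ℝ} {n : ℕ}
    (hg : g ∈ Polynomial.degreeLT ℝ n) (h0 : g ≠ 0) : g.natDegree < n :=
  (Polynomial.natDegree_lt_iff_degree_lt h0).2 (Polynomial.mem_degreeLT.1 hg)

end Mpoly
section Phi

variable {V : Type*} [Fintype V] {k r : ℕ}

open Classical Polynomial

variable (G : SimpleGraph V) (c : Sym2 V → ℝ) (α : Fin (k+1) → ℝ)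

/-- The domain of the dimension-counting injection. -/
noncomputable abbrev PhiDom (G : SimpleGraph V) (r k : ℕ) (c : Sym2 V → ℝ) : Type _ :=
  (Wspace G r c) × (Fin k → Wspace G (r-1) c) ×
    (Π v : V, Polynomial.degreeLT ℝ (min (r - G.degree v) k))

noncomputable def phiFun (p : PhiDom G r k c) : (V × Fin (k+1)) → Polynomial ℝ := fun x =>
  if h : x.2 = 0 then
    (p.1 : V → Polynomial ℝ) x.1 + mpoly G c x.1 * (p.2.2 x.1 : Polynomial ℝ)
  else
    (p.1 : V → Polynomial ℝ) x.1
      + (X - C (α x.2)) * ((p.2.1 (x.2.pred h) : V → Polynomial ℝ) x.1)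
      + C ((p.2.2 x.1 : Polynomial ℝ).eval (α x.2)) * mpoly G c x.1

noncomputable def phiMap : PhiDom G r k c →ₗ[ℝ] ((V × Fin (k+1)) → Polynomial ℝ) where
  toFun := phiFun G c α
  map_add' p q := by
    funext x
    simp only [phiFun, Prod.fst_add, Prod.snd_add, Pi.add_apply, Submodule.coe_add,
      Polynomial.eval_add, map_add]
    split_ifs with h <;> ring
  map_smul' a p := by
    funext x
    simp only [phiFun, Prod.smul_fst, Prod.smul_snd, Pi.smul_apply, SetLike.val_smul,
      Polynomial.eval_smul, smul_eq_mul, map_mul, RingHom.id_apply]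
    split_ifs with h <;> simp only [Polynomial.smul_eq_C_mul] <;> ring

lemma phiMap_injective : Function.Injective (phiMap G c α (r := r) (k := k)) := by
  rw [injective_iff_map_eq_zero]
  rintro ⟨q, b, g⟩ hp
  have hkey : ∀ v : V, (q : V → Polynomial ℝ) v + mpoly G c v * (g v : Polynomial ℝ) = 0 := by
    intro v
    have := congrFun hp (v, 0)
    simpa [phiMap, phiFun] using this
  have hg : ∀ v : V, (g v : Polynomial ℝ) = 0 := by
    intro v
    by_contra hgv
    have hd : G.degree v < r ∧ (g v : Polynomial ℝ).natDegree < min (r - G.degree v) k := by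
      have h1 := natDegree_lt_of_mem_degreeLT (g v).2 hgv
      constructor
      · by_contra hdr
        have : min (r - G.degree v) k = 0 := by omega
        exact hgv (degreeLT_zero_of_mem (g v).2 this)
      · exact h1
    have hmg : mpoly G c v * (g v : Polynomial ℝ) ≠ 0 :=
      mul_ne_zero (mpoly_ne_zero G c v) hgv
    have hqv : (q : V → Polynomial ℝ) v = -(mpoly G c v * (g v : Polynomial ℝ)) := by
      have := hkey v; linear_combination this
    have hqne : (q : V → Polynomial ℝ) v ≠ 0 := by
      rw [hqv]; exact neg_ne_zero.2 hmg
    have hnd : ((q : V → Polynomial ℝ) v).natDegree < min r (G.degree v) :=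
      (Polynomial.natDegree_lt_iff_degree_lt hqne).2 (q.2.1 v)
    have hnd2 : ((q : V → Polynomial ℝ) v).natDegree =
        G.degree v + (g v : Polynomial ℝ).natDegree := by
      rw [hqv, natDegree_neg, Polynomial.natDegree_mul (mpoly_ne_zero G c v) hgv,
        mpoly_natDegree]
    omega
  have hq : ∀ v : V, (q : V → Polynomial ℝ) v = 0 := by
    intro v
    have := hkey v
    rwa [hg v, mul_zero, add_zero] at this
  have hb : ∀ (j : Fin k) (v : V), ((b j : V → Polynomial ℝ)) v = 0 := by
    intro j v
    have h2 := congrFun hp (v, j.succ)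
    simp only [phiMap, phiFun, LinearMap.coe_mk, AddHom.coe_mk, Pi.zero_apply] at h2
    rw [dif_neg (Fin.succ_ne_zero j)] at h2
    rw [hq v, hg v] at h2
    simp only [Polynomial.eval_zero, map_zero, zero_mul, zero_add, add_zero] at h2
    have hX : (X - C (α j.succ)) ≠ 0 := Polynomial.X_sub_C_ne_zero _
    rcases mul_eq_zero.1 h2 with h | h
    · exact absurd h hX
    · rwa [Fin.pred_succ] at h
  refine Prod.ext ?_ (Prod.ext ?_ ?_)
  · exact Subtype.ext (funext hq)
  · funext j
    exact Subtype.ext (funext (hb j))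
  · funext v
    exact Subtype.ext (hg v)

end Phi
section PhiMem

variable {V : Type*} [Fintype V] {k r : ℕ}

open Classical Polynomial

variable (G : SimpleGraph V) (c : Sym2 V → ℝ) (α : Fin (k+1) → ℝ)

lemma phi_deg_zero (hr : 1 ≤ r) (p : PhiDom G r k c) (v : V) :
    (phiFun G c α p (v, 0)).degree < (min r (G.degree v + k) : ℕ) := by
  obtain ⟨q, b, g⟩ := p
  rw [phiFun, dif_pos rfl]
  apply degree_lt_add
  · exact degree_lt_mono (q.2.1 v) (by omega)
  · by_cases hg : (g v : Polynomial ℝ) = 0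
    · rw [hg, mul_zero, Polynomial.degree_zero]
      exact WithBot.bot_lt_coe _
    · have h1 := natDegree_lt_of_mem_degreeLT (g v).2 hg
      have hd : G.degree v < r := by
        by_contra hdr
        exact hg (degreeLT_zero_of_mem (g v).2 (by omega))
      have hne : mpoly G c v * (g v : Polynomial ℝ) ≠ 0 :=
        mul_ne_zero (mpoly_ne_zero G c v) hg
      rw [← Polynomial.natDegree_lt_iff_degree_lt hne,
        Polynomial.natDegree_mul (mpoly_ne_zero G c v) hg, mpoly_natDegree]
      rcases Nat.le_total (r - G.degree v) k with h | h <;> omega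

lemma phi_deg_ne (hr : 1 ≤ r) (p : PhiDom G r k c) (v : V) (i : Fin (k+1)) (hi : i ≠ 0) :
    (phiFun G c α p (v, i)).degree < (min r (G.degree v + 1) : ℕ) := by
  obtain ⟨q, b, g⟩ := p
  rw [phiFun, dif_neg hi]
  apply degree_lt_add
  apply degree_lt_add
  · exact degree_lt_mono (q.2.1 v) (by omega)
  · by_cases hb : ((b (i.pred hi) : V → Polynomial ℝ)) v = 0
    · rw [hb, mul_zero, Polynomial.degree_zero]
      exact WithBot.bot_lt_coe _
    · have h1 : ((b (i.pred hi) : V → Polynomial ℝ) v).natDegree <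
          min (r-1) (G.degree v) :=
        (Polynomial.natDegree_lt_iff_degree_lt hb).2 ((b (i.pred hi)).2.1 v)
      have hXne : (X - C (α i)) ≠ 0 := Polynomial.X_sub_C_ne_zero _
      have hne : (X - C (α i)) * ((b (i.pred hi) : V → Polynomial ℝ)) v ≠ 0 :=
        mul_ne_zero hXne hb
      rw [← Polynomial.natDegree_lt_iff_degree_lt hne,
        Polynomial.natDegree_mul hXne hb, Polynomial.natDegree_X_sub_C]
      omega
  · by_cases hg : (g v : Polynomial ℝ) = 0
    · rw [hg, Polynomial.eval_zero, map_zero, zero_mul, Polynomial.degree_zero]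
      exact WithBot.bot_lt_coe _
    · have hd : G.degree v < r := by
        by_contra hdr
        exact hg (degreeLT_zero_of_mem (g v).2 (by omega))
      by_cases hev : (g v : Polynomial ℝ).eval (α i) = 0
      · rw [hev, map_zero, zero_mul, Polynomial.degree_zero]
        exact WithBot.bot_lt_coe _
      · have hCne : (C ((g v : Polynomial ℝ).eval (α i))) ≠ 0 := by
          rwa [ne_eq, Polynomial.C_eq_zero]
        have hne : (C ((g v : Polynomial ℝ).eval (α i))) * mpoly G c v ≠ 0 :=
          mul_ne_zero hCne (mpoly_ne_zero G c v)
        rw [← Polynomial.natDegree_lt_iff_degree_lt hne,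
          Polynomial.natDegree_mul hCne (mpoly_ne_zero G c v), mpoly_natDegree,
          Polynomial.natDegree_C]
        omega

lemma phi_mem (hr : 1 ≤ r) (p : PhiDom G r k c) :
    phiFun G c α p ∈ Wspace (G □ starGraph k) r (cBox c α) := by
  obtain ⟨q, b, g⟩ := p
  constructor
  · rintro ⟨v, i⟩
    by_cases hi : i = 0
    · subst hi
      have hmain := phi_deg_zero G c α hr ⟨q, b, g⟩ v
      convert hmain using 4
      have h := boxStar_degree G v (0 : Fin (k+1))
      rw [if_pos rfl] at h
      convert h using 2
    · have hmain := phi_deg_ne G c α hr ⟨q, b, g⟩ v i hi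
      convert hmain using 4
      have h := boxStar_degree G v i
      rw [if_neg hi] at h
      convert h using 2
  · rintro ⟨u, i⟩ ⟨v, j⟩ hadj
    rcases SimpleGraph.boxProd_adj.1 hadj with ⟨hGadj, hij⟩ | ⟨hSadj, huv⟩
    · -- layer edge
      dsimp only at hGadj hij
      subst hij
      have hcol : cBox c α s((u, i), (v, i)) = c s(u, v) := by
        rw [cBox_mk, if_pos rfl]
      rw [hcol]
      by_cases hi : i = 0
      · subst hi
        rw [phiFun, phiFun, dif_pos rfl, dif_pos rfl]
        simp only [Polynomial.eval_add, Polynomial.eval_mul]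
        rw [show (mpoly G c u).eval (c s(u,v)) = 0 from by
          rw [Sym2.eq_swap]; exact mpoly_eval_zero c hGadj, mpoly_eval_zero c hGadj.symm]
        rw [q.2.2 u v hGadj]
        ring
      · rw [phiFun, phiFun, dif_neg hi, dif_neg hi]
        simp only [Polynomial.eval_add, Polynomial.eval_mul]
        rw [show (mpoly G c u).eval (c s(u,v)) = 0 from by
          rw [Sym2.eq_swap]; exact mpoly_eval_zero c hGadj, mpoly_eval_zero c hGadj.symm]
        rw [q.2.2 u v hGadj, (b (i.pred hi)).2.2 u v hGadj]
        ring
    · -- star edge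
      dsimp only at hSadj huv
      subst huv
      obtain ⟨hne, h0 | h0⟩ := starGraph_adj.1 hSadj
      · -- i = 0, j ≠ 0
        subst h0
        have hj : j ≠ 0 := fun h => hne (h.symm)
        have hcol : cBox c α s((u, (0 : Fin (k+1))), (u, j)) = α j := by
          rw [cBox_mk, if_neg (by exact fun h => hj h.symm)]
          congr 1
        rw [hcol, phiFun, phiFun, dif_pos rfl, dif_neg hj]
        simp only [Polynomial.eval_add, Polynomial.eval_mul, Polynomial.eval_sub,
          Polynomial.eval_X, Polynomial.eval_C, sub_self, zero_mul]
        ring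
      · -- j = 0, i ≠ 0
        subst h0
        have hi : i ≠ 0 := fun h => hne h
        have hcol : cBox c α s((u, i), (u, (0 : Fin (k+1)))) = α i := by
          rw [cBox_mk, if_neg (by exact fun h => hi h)]
          congr 1
          exact sup_eq_left.2 (Fin.zero_le i)
        rw [hcol, phiFun, phiFun, dif_neg hi, dif_pos rfl]
        simp only [Polynomial.eval_add, Polynomial.eval_mul, Polynomial.eval_sub,
          Polynomial.eval_X, Polynomial.eval_C, sub_self, zero_mul]
        ring

end PhiMem
section Final

variable {V : Type*} [Fintype V] {k r : ℕ}

open Classical Polynomial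

lemma finrank_phiDom (G : SimpleGraph V) (c : Sym2 V → ℝ) :
    Module.finrank ℝ (PhiDom G r k c) =
      Wdim G r c + k * Wdim G (r-1) c + ∑ v : V, min (r - G.degree v) k := by
  rw [Module.finrank_prod, Module.finrank_prod, Module.finrank_pi_fintype,
    Module.finrank_pi_fintype]
  have h1 : ∑ _j : Fin k, Module.finrank ℝ (Wspace G (r-1) c) = k * Wdim G (r-1) c := by
    rw [Finset.sum_const, Finset.card_univ, Fintype.card_fin, smul_eq_mul]
    rfl
  have h2 : ∑ v : V, Module.finrank ℝ (Polynomial.degreeLT ℝ (min (r - G.degree v) k)) =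
      ∑ v : V, min (r - G.degree v) k :=
    Finset.sum_congr rfl (fun v _ => finrank_degreeLT _)
  rw [h1, h2]
  rw [← add_assoc]
  rfl

lemma lower_bound (G : SimpleGraph V) (c : Sym2 V → ℝ) (α : Fin (k+1) → ℝ) (hr : 1 ≤ r) :
    Wdim G r c + k * Wdim G (r-1) c + ∑ v : V, min (r - G.degree v) k ≤
      Wdim (G □ starGraph k) r (cBox c α) := by
  rw [← finrank_phiDom G c]
  have hmem : ∀ p : PhiDom G r k c,
      phiFun G c α p ∈ Wspace (G □ starGraph k) r (cBox c α) :=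
    fun p => phi_mem G c α hr p
  let Ψ : PhiDom G r k c →ₗ[ℝ] (Wspace (G □ starGraph k) r (cBox c α)) :=
    LinearMap.codRestrict _ (phiMap G c α) hmem
  have hinj : Function.Injective Ψ := by
    intro a b h
    apply phiMap_injective G c α
    exact congrArg Subtype.val h
  exact LinearMap.finrank_le_finrank_of_injective hinj

end Final
section Identity

variable {V : Type*} [Fintype V]

open Classical

lemma dcount_eq_filter (G : SimpleGraph V) (z : ℤ) :
    dcount G z = (Finset.univ.filter (fun v => (G.degree v : ℤ) = z)).card := by
  rw [dcount, Nat.card_eq_fintype_card]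
  exact Fintype.card_subtype _

lemma dcount_eq_zero_of_lt (G : SimpleGraph V) {r t : ℕ} (h : r < t) :
    dcount G ((r : ℤ) - t) = 0 := by
  rw [dcount_eq_filter, Finset.card_eq_zero, Finset.filter_eq_empty_iff]
  intro v _
  have : (0 : ℤ) ≤ (G.degree v : ℤ) := Int.natCast_nonneg _
  omega

lemma sum_min_identity (G : SimpleGraph V) (r k : ℕ) (hr : 1 ≤ r) (hk : 1 ≤ k) :
    ∑ v : V, min (r - G.degree v) k =
      (∑ t ∈ Finset.Icc 1 (k - 1), t * dcount G ((r : ℤ) - t)) +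
      k * ∑ t ∈ Finset.Icc k r, dcount G ((r : ℤ) - t) := by
  classical
  have claim1 : ∀ v : V, min (r - G.degree v) k =
      ∑ t ∈ Finset.Icc 1 (max r k), if (G.degree v : ℤ) = (r : ℤ) - t then min t k else 0 := by
    intro v
    by_cases hd : G.degree v < r
    · rw [Finset.sum_eq_single_of_mem (r - G.degree v)
        (by simp only [Finset.mem_Icc]; omega)]
      · rw [if_pos (by push_cast; omega)]
      · intro t _ hne
        rw [if_neg (by push_cast; omega)]
    · rw [Finset.sum_eq_zero, show r - G.degree v = 0 by omega, Nat.min_comm,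
        Nat.min_zero]
      intro t ht
      simp only [Finset.mem_Icc] at ht
      rw [if_neg (by push_cast; omega)]
  rw [Finset.sum_congr rfl (fun v _ => claim1 v), Finset.sum_comm]
  have hswap : ∀ t : ℕ, (∑ v : V, if (G.degree v : ℤ) = (r : ℤ) - t then min t k else 0)
      = min t k * dcount G ((r : ℤ) - t) := by
    intro t
    rw [dcount_eq_filter, ← Finset.sum_filter, Finset.sum_const, smul_eq_mul, mul_comm]
  rw [Finset.sum_congr rfl (fun t _ => hswap t)]
  by_cases hkr : k ≤ r
  · have hmax : max r k = r := by omega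
    rw [hmax, show Finset.Icc 1 r = Finset.Icc 1 (k-1) ∪ Finset.Icc k r from by
      ext t; simp only [Finset.mem_Icc, Finset.mem_union]; omega,
      Finset.sum_union (by
        rw [Finset.disjoint_left]; intro t h1 h2
        simp only [Finset.mem_Icc] at h1 h2; omega)]
    congr 1
    · apply Finset.sum_congr rfl
      intro t ht
      simp only [Finset.mem_Icc] at ht
      rw [show min t k = t by omega]
    · rw [Finset.mul_sum]
      apply Finset.sum_congr rfl
      intro t ht
      simp only [Finset.mem_Icc] at ht
      rw [show min t k = k by omega]
  · have hmax : max r k = k := by omega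
    have hIcc : Finset.Icc k r = ∅ := Finset.Icc_eq_empty (by omega)
    rw [hmax, hIcc, Finset.sum_empty, Nat.mul_zero, Nat.add_zero]
    rw [← Finset.sum_subset (Finset.Icc_subset_Icc_right (by omega) :
        Finset.Icc 1 r ⊆ Finset.Icc 1 k) (by
      intro t ht hnt
      simp only [Finset.mem_Icc] at ht hnt
      rw [dcount_eq_zero_of_lt G (by omega), Nat.mul_zero])]
    rw [← Finset.sum_subset (Finset.Icc_subset_Icc_right (by omega) :
        Finset.Icc 1 r ⊆ Finset.Icc 1 (k-1)) (by
      intro t ht hnt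
      simp only [Finset.mem_Icc] at ht hnt
      rw [dcount_eq_zero_of_lt G (by omega), Nat.mul_zero])]
    apply Finset.sum_congr rfl
    intro t ht
    simp only [Finset.mem_Icc] at ht
    rw [show min t k = t by omega]

end Identity

/-- Recursive formula for `m_e(G □ S_k, r)`. -/
theorem star_recursion {V : Type*} [Fintype V] (G : SimpleGraph V) (r k : ℕ)
    (hr : 1 ≤ r) (hk : 1 ≤ k) (c : Sym2 V → ℝ) (hc : IsProperEdgeColoring G c)
    (hmer : me G r = Wdim G r c) (hmer1 : me G (r - 1) = Wdim G (r - 1) c) :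
    me (G □ starGraph k) r =
      me G r + k * me G (r - 1) +
      (∑ t ∈ Finset.Icc 1 (k - 1), t * dcount G ((r : ℤ) - t)) +
      k * ∑ t ∈ Finset.Icc k r, dcount G ((r : ℤ) - t) := by
  classical
  obtain ⟨α, hαinj, hαr⟩ := exists_alpha c k
  have hup := me_upper (G := G) (r := r) (k := k) hr hk
  have hlow1 := wdim_le_me (G □ starGraph k) r (cBox c α) (cBox_proper hc hαinj hαr)
  have hlow2 := lower_bound (k := k) G c α hr
  rw [← hmer, ← hmer1] at hlow2
  have hmain : me (G □ starGraph k) r =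
      me G r + k * me G (r-1) + ∑ v : V, min (r - G.degree v) k :=
    le_antisymm hup (le_trans hlow2 hlow1)
  rw [hmain, sum_min_identity G r k hr hk]
  ring

end BondPerc
end

section
/- Percolation from full copies in products: let G be a graph with δ(G) ≥ r, and H any connected graph. If in G□H all edges of the copy G_u of G (for some vertex u of H) are infected, and for each other vertex w of H an (r−1)-percolating set of the copy G_w is infected, then running r-bond bootstrap percolation infects all edges of G□H. -/
open Polynomial

namespace BondPerc

open Classical

set_option maxHeartbeats 1000000

private lemma map_edge_mem {V W : Type*} (G : SimpleGraph V) (H : SimpleGraph W) (w : W)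
    {e : Sym2 V} (he : e ∈ G.edgeSet) :
    Sym2.map (fun v => (v, w)) e ∈ (G □ H).edgeSet := by
  induction e using Sym2.ind with
  | _ a b =>
    simp only [Sym2.map_pair_eq, SimpleGraph.mem_edgeSet, SimpleGraph.boxProd_adj] at *
    tauto

private lemma mem_map_vert {V W : Type*} (w : W) {v : V} {e : Sym2 V} (hv : v ∈ e) :
    (v, w) ∈ Sym2.map (fun v => (v, w)) e :=
  Sym2.mem_map.2 ⟨v, hv, rfl⟩

/-- Percolation from full copies in products: if `δ(G) ≥ r`, `H` is connected, the copy
`G_u` is fully infected and each other copy `G_w` carries an infected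
`(r-1)`-percolating set, then `r`-bond bootstrap percolation infects all of `G □ H`. -/
theorem percolation_from_full_copy {V W : Type*} [Fintype V] [Fintype W]
    (G : SimpleGraph V) (H : SimpleGraph W) (hH : H.Connected) (r : ℕ) (hr : 1 ≤ r)
    (hdel : r ≤ G.minDegree) (u : W) (F : W → Set (Sym2 V))
    (hFu : F u = G.edgeSet) (hFw : ∀ w, w ≠ u → Percolates G (r - 1) (F w)) :
    Percolates (G □ H) r (⋃ w, Sym2.map (fun v => (v, w)) '' F w) := by
  classical
  set S : Set (Sym2 (V × W)) := ⋃ w, Sym2.map (fun v => (v, w)) '' F w with hSdef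
  have hFsub : ∀ w, F w ⊆ G.edgeSet := by
    intro w
    by_cases h : w = u
    · subst h; rw [hFu]
    · exact (hFw w h).1
  have hSsub : S ⊆ (G □ H).edgeSet := by
    rintro e he
    simp only [hSdef, Set.mem_iUnion, Set.mem_image] at he
    obtain ⟨w, f, hf, rfl⟩ := he
    exact map_edge_mem G H w (hFsub w hf)
  have hdeg : ∀ v : V, r ≤ G.degree v := fun v => le_trans hdel (G.minDegree_le_degree v)
  have base : ∀ e ∈ G.edgeSet, Infected (G □ H) r S (Sym2.map (fun v => (v, u)) e) := by
    intro e he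
    exact Infected.init (Set.mem_iUnion.2 ⟨u, ⟨e, by rw [hFu]; exact he, rfl⟩⟩)
  -- vertical edges out of a fully infected copy
  have vert : ∀ w w', H.Adj w w' →
      (∀ e ∈ G.edgeSet, Infected (G □ H) r S (Sym2.map (fun v => (v, w)) e)) →
      ∀ v : V, Infected (G □ H) r S s((v, w), (v, w')) := by
    intro w w' hww' hfull v
    have hinj : Function.Injective (fun x : V => s((v, w), (x, w))) := by
      intro a b h
      have := Sym2.congr_right.1 h
      exact congrArg Prod.fst this
    refine Infected.step ?_ (v, w) (Sym2.mem_mk_left _ _)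
      ((G.neighborFinset v).image (fun x => s((v, w), (x, w)))) ?_ ?_ ?_ ?_
    · exact (SimpleGraph.mem_edgeSet _).2 (Or.inr ⟨hww', rfl⟩)
    · rw [Finset.card_image_of_injective _ hinj, SimpleGraph.card_neighborFinset_eq_degree]
      exact hdeg v
    · intro f hf
      obtain ⟨x, hx, rfl⟩ := Finset.mem_image.1 hf
      exact (SimpleGraph.mem_edgeSet _).2
        (Or.inl ⟨(SimpleGraph.mem_neighborFinset _ _ _).1 hx, rfl⟩)
    · intro f hf
      obtain ⟨x, hx, rfl⟩ := Finset.mem_image.1 hf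
      exact Sym2.mem_mk_left _ _
    · intro f hf
      obtain ⟨x, hx, rfl⟩ := Finset.mem_image.1 hf
      have := hfull s(v, x) ((SimpleGraph.mem_edgeSet _).2 ((SimpleGraph.mem_neighborFinset _ _ _).1 hx))
      rwa [Sym2.map_pair_eq] at this
  -- lift (r-1)-percolation in a copy once vertical edges are infected
  have copyStep : ∀ w w', H.Adj w w' → w' ≠ u →
      (∀ e ∈ G.edgeSet, Infected (G □ H) r S (Sym2.map (fun v => (v, w)) e)) →
      ∀ e ∈ G.edgeSet, Infected (G □ H) r S (Sym2.map (fun v => (v, w')) e) := by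
    intro w w' hww' hne hfull e he
    have hvert := vert w w' hww' hfull
    have hperc := (hFw w' hne).2 e he
    clear he
    induction hperc with
    | init hf => exact Infected.init (Set.mem_iUnion.2 ⟨w', ⟨_, hf, rfl⟩⟩)
    | step hf v hv T hT hT1 hT2 hT3 ih =>
      have hwne : w' ≠ w := fun h => hww'.ne (h.symm)
      have hnotmem : s((v, w'), (v, w)) ∉ T.image (Sym2.map (fun x => (x, w'))) := by
        intro hmem
        obtain ⟨g, hg, hgeq⟩ := Finset.mem_image.1 hmem
        have : (v, w) ∈ Sym2.map (fun x => (x, w')) g := by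
          rw [hgeq]; exact Sym2.mem_mk_right _ _
        obtain ⟨a, _, haeq⟩ := Sym2.mem_map.1 this
        exact hwne (congrArg Prod.snd haeq)
      refine Infected.step (map_edge_mem G H w' hf) (v, w') (mem_map_vert w' hv)
        (insert s((v, w'), (v, w)) (T.image (Sym2.map (fun x => (x, w'))))) ?_ ?_ ?_ ?_
      · rw [Finset.card_insert_of_notMem hnotmem]
        have hinj : Function.Injective (Sym2.map (fun x : V => (x, w'))) := by
          apply Sym2.map.injective
          intro a b h
          exact congrArg Prod.fst h
        rw [Finset.card_image_of_injective _ hinj]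
        omega
      · intro f hfm
        rcases Finset.mem_insert.1 hfm with h | h
        · subst h
          exact (SimpleGraph.mem_edgeSet _).2 (Or.inr ⟨hww'.symm, rfl⟩)
        · obtain ⟨g, hg, rfl⟩ := Finset.mem_image.1 h
          exact map_edge_mem G H w' (hT1 g hg)
      · intro f hfm
        rcases Finset.mem_insert.1 hfm with h | h
        · subst h; exact Sym2.mem_mk_left _ _
        · obtain ⟨g, hg, rfl⟩ := Finset.mem_image.1 h
          exact mem_map_vert w' (hT2 g hg)
      · intro f hfm
        rcases Finset.mem_insert.1 hfm with h | h
        · subst h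
          rw [Sym2.eq_swap]
          exact hvert v
        · obtain ⟨g, hg, rfl⟩ := Finset.mem_image.1 h
          exact ih g hg
  -- propagate along walks
  have allCopies : ∀ w, ∀ e ∈ G.edgeSet,
      Infected (G □ H) r S (Sym2.map (fun v => (v, w)) e) := by
    have key : ∀ w w' (p : H.Walk w w'),
        (∀ e ∈ G.edgeSet, Infected (G □ H) r S (Sym2.map (fun v => (v, w)) e)) →
        (∀ e ∈ G.edgeSet, Infected (G □ H) r S (Sym2.map (fun v => (v, w')) e)) := by
      intro w w' p
      induction p with
      | nil => exact id
      | @cons a x b h p ih =>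
        intro hw
        apply ih
        by_cases hx : x = u
        · subst hx; exact base
        · exact copyStep a x h hx hw
    intro w
    obtain ⟨p⟩ := hH.preconnected u w
    exact key u w p base
  refine ⟨hSsub, ?_⟩
  intro e he
  induction e using Sym2.ind with
  | _ x y =>
    obtain ⟨a, w1⟩ := x
    obtain ⟨b, w2⟩ := y
    rw [SimpleGraph.mem_edgeSet, SimpleGraph.boxProd_adj] at he
    rcases he with ⟨hab, hw⟩ | ⟨hw, hab⟩
    · simp only at hw hab
      subst hw
      have := allCopies w1 s(a, b) ((SimpleGraph.mem_edgeSet _).2 hab)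
      rwa [Sym2.map_pair_eq] at this
    · simp only at hw hab
      subst hab
      exact vert w1 w2 hw (allCopies w1) a


end BondPerc
end
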